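/- Let G be a group of order mp, where p is a prime not dividing m, and assume G has a unique Sylow p-subgroup P. Let M ≤ G be a subgroup of order m and assume p does not divide |Aut(M)|. Let N be a regular subgroup of Hol(G), γ its associated gamma function, and ν(h) = γ(h)·ρ(h). Then: (1) ν(P) ≤ N, so that ν(P) is a Sylow p-subgroup of N; (2) ν(P) ∈ { ρ(P), λ(P) }, where λ is the left regular representation; (3) [ρ(G), ν(P)] ≤ ν(P). -/

import Mathlib

/- Formalization of results from "Hopf-Galois structures on extensions of degree p²q and
skew braces of order p²q: the cyclic Sylow p-subgroup case" (Campedel, Caranti, Del Corso).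

Conventions: the paper composes permutations/automorphisms left-to-right and writes
`x^α` for the action; in Mathlib composition is right-to-left, so the paper's product
`αβ` is rendered as `β * α`, the paper's `x^α` as `α x`, and the paper's conjugate
`α^β = β⁻¹αβ` as `β * α * β⁻¹`. -/

namespace HGS

universe u v

variable {G : Type*} [Group G]

/-- The right regular representation `ρ`: `rhoPerm g` is the permutation `x ↦ x * g`. -/
def rhoPerm (g : G) : Equiv.Perm G := Equiv.mulRight g

/-- The image `ρ(G)` of the right regular representation, as a subgroup of `Equiv.Perm G`. -/
def rhoSubgroup (G : Type*) [Group G] : Subgroup (Equiv.Perm G) where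
  carrier := Set.range (rhoPerm (G := G))
  one_mem' := ⟨1, by ext x; simp [rhoPerm]⟩
  mul_mem' := by
    rintro _ _ ⟨g, rfl⟩ ⟨h, rfl⟩
    exact ⟨h * g, by ext x; simp [rhoPerm, Equiv.Perm.mul_apply, mul_assoc]⟩
  inv_mem' := by
    rintro _ ⟨g, rfl⟩
    exact ⟨g⁻¹, by ext x; simp [rhoPerm, Equiv.Perm.inv_def, Equiv.mulRight_symm]⟩

/-- The (permutational) holomorph of `G`: the normalizer in the symmetric group
`Perm G` of the image of the right regular representation. -/
def Hol (G : Type*) [Group G] : Subgroup (Equiv.Perm G) :=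
  Subgroup.normalizer ((rhoSubgroup G : Subgroup (Equiv.Perm G)) : Set (Equiv.Perm G))

/-- A subgroup `N ≤ Perm G` is regular if it acts simply transitively on the set `G`. -/
def IsRegularSubgroup (N : Subgroup (Equiv.Perm G)) : Prop :=
  ∀ x y : G, ∃! n : N, (n : Equiv.Perm G) x = y

/-- A gamma function (GF) on `G`: a map `γ : G → Aut G` satisfying the gamma functional
equation `γ(g^{γ(h)}·h) = γ(g)γ(h)` (the right-hand side is the paper's product, which in
Mathlib's composition order reads `γ h * γ g`). -/
def IsGammaFunction (γ : G → MulAut G) : Prop :=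
  ∀ g h : G, γ (γ h g * h) = γ h * γ g

/-- The circle operation `g ∘ h = g^{γ(h)} · h` associated to a gamma function. -/
def circ (γ : G → MulAut G) (g h : G) : G := γ h g * h

/-- `nu γ h` is the permutation `ν(h) = γ(h)ρ(h) : x ↦ (γ h x) * h`. -/
def nu (γ : G → MulAut G) (h : G) : Equiv.Perm G :=
  rhoPerm h * (γ h).toEquiv

section Helpers

variable {H : Type*} [Group H]

theorem exists_subgroup_of_mul_closed [Finite H] {s : Set H} (h1 : (1 : H) ∈ s)
    (hmul : ∀ a ∈ s, ∀ b ∈ s, a * b ∈ s) : ∃ S : Subgroup H, (S : Set H) = s := by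
  have hpow : ∀ a ∈ s, ∀ n : ℕ, a ^ (n + 1) ∈ s := by
    intro a ha n
    induction n with
    | zero => simpa using ha
    | succ k ih => rw [pow_succ]; exact hmul _ ih _ ha
  have hinv : ∀ a ∈ s, a⁻¹ ∈ s := by
    intro a ha
    have h0 : 0 < orderOf a := orderOf_pos a
    have hai : a ^ (orderOf a - 1) = a⁻¹ := by
      rw [eq_inv_iff_mul_eq_one, ← pow_succ, Nat.sub_add_cancel h0, pow_orderOf_eq_one]
    rcases Nat.eq_zero_or_pos (orderOf a - 1) with h | h
    · rw [← hai, h, pow_zero]; exact h1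
    · obtain ⟨k, hk⟩ := Nat.exists_eq_succ_of_ne_zero h.ne'
      rw [← hai, hk]; exact hpow a ha k
  exact ⟨{ carrier := s, one_mem' := h1,
           mul_mem' := fun ha hb => hmul _ ha _ hb,
           inv_mem' := fun ha => hinv _ ha }, rfl⟩

variable {p : ℕ} [Fact p.Prime]

/-- `u ^ k` for `k : ZMod p`. -/
def epow (u : H) (k : ZMod p) : H := u ^ k.val

theorem epow_natCast {u : H} (hou : orderOf u = p) (n : ℕ) : epow u (n : ZMod p) = u ^ n := by
  unfold epow
  rw [ZMod.val_natCast, pow_eq_pow_iff_modEq, hou]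
  exact Nat.mod_modEq n p

theorem epow_inj {u : H} (hou : orderOf u = p) :
    Function.Injective (epow u : ZMod p → H) := by
  intro j k h
  have hj : ((j.val : ℕ) : ZMod p) = j := ZMod.natCast_rightInverse j
  have hk : ((k.val : ℕ) : ZMod p) = k := ZMod.natCast_rightInverse k
  have := (pow_eq_pow_iff_modEq (x := u)).mp h
  rw [hou] at this
  rw [← hj, ← hk, ZMod.natCast_eq_natCast_iff]
  exact this

theorem epow_add {u : H} (hou : orderOf u = p) (j k : ZMod p) :
    epow u (j + k) = epow u j * epow u k := by
  have hj : ((j.val : ℕ) : ZMod p) = j := ZMod.natCast_rightInverse j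
  have hk : ((k.val : ℕ) : ZMod p) = k := ZMod.natCast_rightInverse k
  have : epow u (j + k) = epow u (((j.val + k.val : ℕ) : ZMod p)) := by
    congr 1; push_cast [hj, hk]; ring
  rw [this, epow_natCast hou, pow_add]; rfl

theorem epow_pow {u : H} (hou : orderOf u = p) (j : ZMod p) (n : ℕ) :
    epow u j ^ n = epow u (j * (n : ZMod p)) := by
  have hj : ((j.val : ℕ) : ZMod p) = j := ZMod.natCast_rightInverse j
  have : epow u (j * (n : ZMod p)) = epow u (((j.val * n : ℕ) : ZMod p)) := by
    congr 1; push_cast [hj]; ring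
  rw [this, epow_natCast hou, pow_mul]; rfl

theorem epow_pow_val {u : H} (hou : orderOf u = p) (j k : ZMod p) :
    epow u j ^ k.val = epow u (j * k) := by
  have hk : ((k.val : ℕ) : ZMod p) = k := ZMod.natCast_rightInverse k
  rw [epow_pow hou, hk]

theorem epow_zero (u : H) : epow u (0 : ZMod p) = 1 := by
  unfold epow; rw [ZMod.val_zero, pow_zero]

theorem epow_one {u : H} (hou : orderOf u = p) : epow u (1 : ZMod p) = u := by
  have h1 : ((1 : ℕ) : ZMod p) = 1 := by push_cast; ring
  rw [← h1, epow_natCast hou, pow_one]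

theorem epow_neg {u : H} (hou : orderOf u = p) (k : ZMod p) :
    epow u (-k) = (epow u k)⁻¹ := by
  apply eq_inv_of_mul_eq_one_left
  rw [← epow_add hou, neg_add_cancel, epow_zero]

theorem epow_mem {u : H} {Pn : Subgroup H} (hu : u ∈ Pn) (k : ZMod p) : epow u k ∈ Pn :=
  Pn.pow_mem hu _

theorem conj_epow {u : H} (hou : orderOf u = p) {g : H} {kc : ZMod p}
    (hg : g⁻¹ * u * g = epow u kc) (k : ZMod p) :
    g⁻¹ * epow u k * g = epow u (kc * k) := by
  have h1 : g⁻¹ * u ^ k.val * g = (g⁻¹ * u * g) ^ k.val := by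
    have := map_pow (MulAut.conj g⁻¹) u k.val
    simpa [MulAut.conj_apply, mul_assoc] using this
  calc g⁻¹ * epow u k * g = (g⁻¹ * u * g) ^ k.val := h1
    _ = epow u kc ^ k.val := by rw [hg]
    _ = epow u (kc * k) := epow_pow_val hou kc k

end Helpers

section Arith

variable {G : Type*} [Group G]

theorem mem_inter_eq_one [Finite G] {m p : ℕ} (hp : p.Prime) (hpm : ¬ p ∣ m)
    {M Pn : Subgroup G} (hM : Nat.card M = m) (hPcard : Nat.card Pn = p) :
    ∀ x : G, x ∈ M → x ∈ Pn → x = 1 := by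
  intro x hxM hxP
  have h1 : orderOf x ∣ m := hM ▸ Subgroup.orderOf_dvd_natCard M hxM
  have h2 : orderOf x ∣ p := hPcard ▸ Subgroup.orderOf_dvd_natCard Pn hxP
  have hcop : Nat.Coprime p m := (Nat.Prime.coprime_iff_not_dvd hp).mpr hpm
  have hd : orderOf x ∣ 1 := hcop.gcd_eq_one ▸ Nat.dvd_gcd h2 h1
  simpa [orderOf_eq_one_iff] using Nat.dvd_one.mp hd

theorem exists_mul_decomp [Finite G] {m p : ℕ} (hp : p.Prime) (hpm : ¬ p ∣ m)
    (hcard : Nat.card G = m * p) {M Pn : Subgroup G}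
    (hM : Nat.card M = m) (hPcard : Nat.card Pn = p) :
    ∀ g : G, ∃ x v : G, x ∈ M ∧ v ∈ Pn ∧ g = x * v := by
  have hinter := mem_inter_eq_one hp hpm hM hPcard
  have hinj : Function.Injective (fun z : M × Pn => (z.1 : G) * (z.2 : G)) := by
    rintro ⟨⟨x, hx⟩, ⟨v, hv⟩⟩ ⟨⟨x', hx'⟩, ⟨v', hv'⟩⟩ h
    simp only at h
    have key : x'⁻¹ * x = v' * v⁻¹ := by
      calc x'⁻¹ * x = x'⁻¹ * (x * v) * v⁻¹ := by group
        _ = x'⁻¹ * (x' * v') * v⁻¹ := by rw [h]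
        _ = v' * v⁻¹ := by group
    have h1 : x'⁻¹ * x ∈ M := M.mul_mem (M.inv_mem hx') hx
    have h2 : x'⁻¹ * x ∈ Pn := key ▸ Pn.mul_mem hv' (Pn.inv_mem hv)
    have hx1 : x'⁻¹ * x = 1 := hinter _ h1 h2
    have hxx : x = x' := by
      have h' := hx1; rw [inv_mul_eq_one] at h'; exact h'.symm
    have hvv : v = v' := by
      have : v' * v⁻¹ = 1 := by rw [← key, hx1]
      rw [mul_inv_eq_one] at this; exact this.symm
    subst hxx; subst hvv; rfl
  have hcards : Nat.card (M × Pn) = Nat.card G := by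
    rw [Nat.card_prod, hM, hPcard, hcard]
  have hbij := (Nat.bijective_iff_injective_and_card
    (fun z : M × Pn => (z.1 : G) * (z.2 : G))).mpr ⟨hinj, hcards⟩
  intro g
  obtain ⟨⟨x, v⟩, hxv⟩ := hbij.2 g
  exact ⟨x, v, x.2, v.2, hxv.symm⟩

end Arith

section AutLemmas

variable {G : Type*} [Group G] {p : ℕ} [Fact p.Prime]

theorem fixes_of_pow_eq_one {Pn : Subgroup G}
    (hchar : ∀ (e : MulAut G), ∀ x ∈ Pn, e x ∈ Pn)
    {u : G} (hou : orderOf u = p) (hu : u ∈ Pn)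
    (hgen : ∀ v ∈ Pn, ∃ k : ZMod p, v = epow u k)
    (α : MulAut G) (hα : α ^ p = 1) : ∀ v ∈ Pn, α v = v := by
  obtain ⟨j, hj⟩ := hgen (α u) (hchar α u hu)
  have hpow : ∀ n : ℕ, (α ^ n) u = epow u (j ^ n) := by
    intro n
    induction n with
    | zero => simp [pow_zero, epow_one hou]
    | succ k ih =>
      rw [pow_succ', MulAut.mul_apply, ih]
      show α (u ^ (j ^ k).val) = _
      rw [map_pow, hj]
      rw [epow_pow_val hou j (j ^ k), ← pow_succ']
  have hjp : epow u (j ^ p) = u := by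
    have := hpow p
    rw [hα] at this
    simpa using this.symm
  have hj1 : j = 1 := by
    have : epow u j = epow u (1 : ZMod p) := by
      rw [← ZMod.pow_card j, hjp, epow_one hou]
    exact epow_inj hou this
  have hαu : α u = u := by rw [hj, hj1, epow_one hou]
  intro v hv
  obtain ⟨k, rfl⟩ := hgen v hv
  show α (u ^ k.val) = u ^ k.val
  rw [map_pow, hαu]

theorem aut_quotient_trivial [Finite G] {m : ℕ} (hpm : ¬ p ∣ m)
    (hcard : Nat.card G = m * p) {Pn : Subgroup G} (hPcard : Nat.card Pn = p)
    (hchar : ∀ (e : MulAut G), ∀ x ∈ Pn, e x ∈ Pn)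
    {M : Subgroup G} (hM : Nat.card M = m) (hAutM : ¬ p ∣ Nat.card (MulAut M))
    (α : MulAut G) (hα : α ^ p = 1) : ∀ g : G, g⁻¹ * α g ∈ Pn := by
  have hp : p.Prime := Fact.out
  haveI hnormal : Pn.Normal := ⟨fun x hx g => by simpa using hchar (MulAut.conj g) x hx⟩
  have hmap : ∀ e : MulAut G, Pn.map (e : G →* G) = Pn := by
    intro e
    apply le_antisymm
    · rintro _ ⟨x, hx, rfl⟩; exact hchar e x hx
    · intro x hx
      refine ⟨e⁻¹ x, hchar e⁻¹ x hx, ?_⟩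
      show e (e⁻¹ x) = x
      rw [← MulAut.mul_apply, mul_inv_cancel, MulAut.one_apply]
  have hQcard : Nat.card (G ⧸ Pn) = m := by
    have h := Subgroup.card_eq_card_quotient_mul_card_subgroup Pn
    rw [hcard, hPcard] at h
    exact Nat.eq_of_mul_eq_mul_right hp.pos h.symm
  set β : MulAut (G ⧸ Pn) := QuotientGroup.congr Pn Pn (α : G ≃* G) (hmap α) with hβ
  have hβmk : ∀ g : G, β ((g : G ⧸ Pn)) = ((α g : G) : G ⧸ Pn) := fun g =>
    QuotientGroup.congr_mk Pn Pn (α : G ≃* G) (hmap α) g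
  have hβpow : ∀ (n : ℕ) (g : G), (β ^ n) ((g : G ⧸ Pn)) = (((α ^ n) g : G) : G ⧸ Pn) := by
    intro n
    induction n with
    | zero => intro g; simp
    | succ k ih =>
      intro g
      rw [pow_succ', MulAut.mul_apply, ih g, hβmk ((α ^ k) g), pow_succ', MulAut.mul_apply]
  have hβp : β ^ p = 1 := by
    apply DFunLike.ext
    intro q
    induction q using QuotientGroup.induction_on with
    | H g => rw [hβpow p g, hα]; simp
  have horder : orderOf β ∣ p := orderOf_dvd_of_pow_eq_one hβp
  have hiso : Nat.card (MulAut (G ⧸ Pn)) = Nat.card (MulAut M) := by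
    have hφinj : Function.Injective ((QuotientGroup.mk' Pn).comp M.subtype) := by
      rw [injective_iff_map_eq_one]
      intro x hx
      have hxP : (x : G) ∈ Pn := by
        have := hx
        simpa [QuotientGroup.eq_one_iff] using this
      have := mem_inter_eq_one hp hpm hM hPcard (x : G) x.2 hxP
      exact Subtype.ext this
    have hbij := (Nat.bijective_iff_injective_and_card
      ((QuotientGroup.mk' Pn).comp M.subtype)).mpr ⟨hφinj, by rw [hM, hQcard]⟩
    have iso : M ≃* (G ⧸ Pn) := MulEquiv.ofBijective _ hbij
    exact (Nat.card_congr (MulAut.congr iso).toEquiv).symm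
  have horder2 : orderOf β ∣ Nat.card (MulAut M) := hiso ▸ orderOf_dvd_natCard β
  have hβ1 : β = 1 := by
    rw [← orderOf_eq_one_iff]
    rcases (Nat.dvd_prime hp).mp horder with h | h
    · exact h
    · exact absurd (h ▸ horder2) hAutM
  intro g
  have hq : ((α g : G) : G ⧸ Pn) = (g : G ⧸ Pn) := by
    rw [← hβmk g, hβ1, MulAut.one_apply]
  have := QuotientGroup.eq.mp hq.symm
  exact this

end AutLemmas

section ConjForm

variable {G : Type*} [Group G] {p : ℕ} [Fact p.Prime]

theorem aux_conj [Finite G] {m : ℕ} (hpm : ¬ p ∣ m) (hcard : Nat.card G = m * p)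
    {Pn : Subgroup G} (hPcard : Nat.card Pn = p)
    (hchar : ∀ (e : MulAut G), ∀ x ∈ Pn, e x ∈ Pn)
    {M : Subgroup G} (hM : Nat.card M = m) (hAutM : ¬ p ∣ Nat.card (MulAut M))
    {u : G} (hou : orderOf u = p) (hu : u ∈ Pn)
    (hgen : ∀ v ∈ Pn, ∃ k : ZMod p, v = epow u k)
    (α : MulAut G) (hα : α ^ p = 1) :
    ∃ a ∈ Pn, ∀ g : G, α g = a * g * a⁻¹ := by
  classical
  have hp : p.Prime := Fact.out
  haveI hnormal : Pn.Normal := ⟨fun x hx g => by simpa using hchar (MulAut.conj g) x hx⟩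
  have hfix := fixes_of_pow_eq_one hchar hou hu hgen α hα
  have hmod := aut_quotient_trivial hpm hcard hPcard hchar hM hAutM α hα
  have hconjP : ∀ g : G, g⁻¹ * u * g ∈ Pn := fun g => by
    simpa using hnormal.conj_mem u hu g⁻¹
  choose c hc using fun g => hgen _ (hconjP g)
  choose F hF using fun g => hgen _ (hmod g)
  -- cocycle property
  have hFc : ∀ x y : G, F (x * y) = c y * F x + F y := by
    intro x y
    apply epow_inj hou
    have e1 : epow u (F (x * y)) = (x * y)⁻¹ * α (x * y) := (hF _).symm
    rw [e1]
    calc (x * y)⁻¹ * α (x * y)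
        = y⁻¹ * (x⁻¹ * α x) * y * (y⁻¹ * α y) := by rw [map_mul]; group
      _ = y⁻¹ * epow u (F x) * y * epow u (F y) := by rw [← hF x, ← hF y]
      _ = epow u (c y * F x) * epow u (F y) := by rw [conj_epow hou (hc y)]
      _ = epow u (c y * F x + F y) := (epow_add hou _ _).symm
  -- F vanishes on P
  have hFP : ∀ k : ZMod p, F (epow u k) = 0 := by
    intro k
    apply epow_inj hou
    rw [← hF, hfix _ (epow_mem hu k), inv_mul_cancel, epow_zero]
  -- c is 1 on P
  have hcP : ∀ k : ZMod p, c (epow u k) = 1 := by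
    intro k
    apply epow_inj hou
    rw [← hc]
    have hcomm : u * epow u k = epow u k * u := by
      show u * u ^ k.val = u ^ k.val * u
      exact (Commute.refl u).pow_right k.val |>.eq
    rw [mul_assoc, hcomm, ← mul_assoc, inv_mul_cancel, one_mul, epow_one hou]
  -- averaging over M
  haveI := Fintype.ofFinite G
  haveI : Fintype M := Fintype.ofFinite M
  have hcardM : ((Fintype.card M : ℕ) : ZMod p) = (m : ZMod p) := by
    rw [← Nat.card_eq_fintype_card, hM]
  have havg : ∀ y : M, (∑ x : M, F (x : G)) = c (y : G) * (∑ x : M, F (x : G)) + (m : ZMod p) * F (y : G) := by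
    intro y
    have h1 : (∑ x : M, F (x : G)) = ∑ x : M, F ((x : G) * (y : G)) := by
      refine Fintype.sum_equiv (Equiv.mulRight y⁻¹) _ _ (fun x => ?_)
      rw [Equiv.coe_mulRight]
      congr 1
      push_cast
      group
    calc (∑ x : M, F (x : G)) = ∑ x : M, F ((x : G) * (y : G)) := h1
      _ = ∑ x : M, (c (y : G) * F (x : G) + F (y : G)) :=
          Finset.sum_congr rfl (fun x _ => hFc _ _)
      _ = c (y : G) * (∑ x : M, F (x : G)) + (m : ZMod p) * F (y : G) := by
          rw [Finset.sum_add_distrib, ← Finset.mul_sum, Finset.sum_const, nsmul_eq_mul,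
            Finset.card_univ, hcardM]
  have hm0 : (m : ZMod p) ≠ 0 := fun h => hpm ((ZMod.natCast_eq_zero_iff m p).mp h)
  obtain ⟨s, hFM⟩ : ∃ s : ZMod p, ∀ y : M, F (y : G) = s * (1 - c (y : G)) := by
    refine ⟨(m : ZMod p)⁻¹ * (∑ x : M, F (x : G)), fun y => ?_⟩
    have h' := havg y
    have h2 : (m : ZMod p) * F (y : G) = (∑ x : M, F (x : G)) * (1 - c (y : G)) := by
      linear_combination -h'
    apply mul_left_cancel₀ hm0
    rw [h2]
    field_simp
  -- the coboundary element
  refine ⟨epow u (-s), epow_mem hu _, ?_⟩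
  intro g
  obtain ⟨x, v, hxM, hvP, rfl⟩ := exists_mul_decomp hp hpm hcard hM hPcard g
  obtain ⟨kv, rfl⟩ := hgen v hvP
  have hcg : c (x * epow u kv) = c x := by
    apply epow_inj hou
    rw [← hc]
    calc (x * epow u kv)⁻¹ * u * (x * epow u kv)
        = (epow u kv)⁻¹ * (x⁻¹ * u * x) * epow u kv := by group
      _ = (epow u kv)⁻¹ * epow u (c x) * epow u kv := by rw [hc]
      _ = epow u (c (epow u kv) * c x) := conj_epow hou (hc _) _
      _ = epow u (c x) := by rw [hcP, one_mul]
  have hFx : F x = s * (1 - c x) := hFM ⟨x, hxM⟩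
  have hFg : F (x * epow u kv) = s * (1 - c (x * epow u kv)) := by
    rw [hFc, hcP, hFP, one_mul, add_zero, hcg]
    exact hFx
  set g := x * epow u kv with hg
  have hαg : α g = g * epow u (F g) := by
    have := hF g
    rw [← this]
    group
  rw [hαg]
  have hconj2 : g⁻¹ * (epow u (-s) * g * (epow u (-s))⁻¹) = epow u (F g) := by
    have e2 : (epow u (-s) : G)⁻¹ = epow u s := by
      rw [epow_neg hou, inv_inv]
    calc g⁻¹ * (epow u (-s) * g * (epow u (-s))⁻¹)
        = (g⁻¹ * epow u (-s) * g) * (epow u (-s))⁻¹ := by group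
      _ = epow u (c g * (-s)) * epow u s := by rw [conj_epow hou (hc g), e2]
      _ = epow u (c g * (-s) + s) := (epow_add hou _ _).symm
      _ = epow u (F g) := by rw [hFg]; congr 1; ring
  calc g * epow u (F g) = g * (g⁻¹ * (epow u (-s) * g * (epow u (-s))⁻¹)) := by rw [hconj2]
    _ = epow u (-s) * g * (epow u (-s))⁻¹ := by group

end ConjForm

section NuLemmas

variable {G : Type*} [Group G]

theorem nu_apply (γ : G → MulAut G) (h x : G) : nu γ h x = γ h x * h := rfl

theorem gamma_one {γ : G → MulAut G} (hγ : IsGammaFunction γ) : γ 1 = 1 := by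
  have h := hγ 1 1
  rw [map_one, one_mul] at h
  exact (left_eq_mul.mp h)

theorem nu_one {γ : G → MulAut G} (hγ : IsGammaFunction γ) : nu γ 1 = 1 := by
  ext x
  show γ 1 x * 1 = x
  rw [gamma_one hγ, MulAut.one_apply, mul_one]

theorem nu_injective (γ : G → MulAut G) : Function.Injective (nu γ) := by
  intro a b h
  have ha : nu γ a 1 = a := by rw [nu_apply, map_one, one_mul]
  have hb : nu γ b 1 = b := by rw [nu_apply, map_one, one_mul]
  rw [← ha, ← hb, h]

theorem nu_mul {γ : G → MulAut G} (hγ : IsGammaFunction γ) (a b : G) :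
    nu γ a * nu γ b = nu γ (γ a b * a) := by
  ext x
  rw [Equiv.Perm.mul_apply]
  rw [nu_apply, nu_apply, nu_apply, hγ b a]
  rw [map_mul, MulAut.mul_apply, mul_assoc]

theorem rhoPerm_mul (a b : G) : rhoPerm a * rhoPerm b = rhoPerm (b * a) := by
  ext x
  show (x * b) * a = x * (b * a)
  rw [mul_assoc]

theorem rhoPerm_inv (a : G) : (rhoPerm a)⁻¹ = rhoPerm a⁻¹ := by
  ext x
  simp [rhoPerm, Equiv.Perm.inv_def, Equiv.mulRight_symm]

end NuLemmas

/-- the generalisation of Kohl's theorem in Subsection 2.7 of the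
paper.  `λ` is the left regular representation `g ↦ Equiv.mulLeft g`. -/
theorem kohl_generalisation
    {G : Type u} [Group G] [Finite G] {m p : ℕ} (hp : p.Prime)
    (hpm : ¬ p ∣ m) (hcard : Nat.card G = m * p)
    (P : Sylow p G) (hPuniq : ∀ Q : Sylow p G, Q = P)
    (M : Subgroup G) (hM : Nat.card M = m) (hAutM : ¬ p ∣ Nat.card (MulAut M))
    (N : Subgroup (Equiv.Perm G)) (hN : N ≤ Hol G) (hreg : IsRegularSubgroup N)
    (γ : G → MulAut G) (hγ : IsGammaFunction γ) (hass : ∀ h : G, nu γ h ∈ N) :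
    (∀ x ∈ (P : Subgroup G), nu γ x ∈ N) ∧
    ∃ S : Subgroup (Equiv.Perm G),
      (S : Set (Equiv.Perm G)) = nu γ '' ((P : Subgroup G) : Set G) ∧ S ≤ N ∧
      Nat.card S = p ∧
      (nu γ '' ((P : Subgroup G) : Set G) = rhoPerm '' ((P : Subgroup G) : Set G) ∨
        nu γ '' ((P : Subgroup G) : Set G) =
          (fun g : G => Equiv.mulLeft g) '' ((P : Subgroup G) : Set G)) ∧
      ⁅rhoSubgroup G, S⁆ ≤ S := by
  classical
  haveI : Fact p.Prime := ⟨hp⟩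
  -- cardinalities
  have hm0 : m ≠ 0 := by
    rintro rfl
    rw [zero_mul] at hcard
    exact (Nat.card_pos (α := G)).ne' hcard
  have hfact : (m * p).factorization p = 1 := by
    rw [Nat.factorization_mul hm0 hp.ne_zero, Finsupp.add_apply,
      Nat.factorization_eq_zero_of_not_dvd hpm, hp.factorization, Finsupp.single_eq_same,
      zero_add]
  have hPcard : Nat.card (P : Subgroup G) = p := by
    have h := P.card_eq_multiplicity
    rw [hcard, hfact, pow_one] at h
    exact h
  -- characteristic
  have hchar : ∀ (e : MulAut G), ∀ x ∈ (P : Subgroup G), e x ∈ (P : Subgroup G) := by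
    intro e x hx
    have hinj : Function.Injective (e : G →* G) := e.injective
    have hcardmap : Nat.card ((P : Subgroup G).map (e : G →* G)) = p := by
      have h2 : Nat.card ((P : Subgroup G).map (e : G →* G)) = Nat.card (P : Subgroup G) :=
        (Nat.card_congr (Subgroup.equivMapOfInjective _ _ hinj).toEquiv).symm
      rw [h2, hPcard]
    have hpg : IsPGroup p ((P : Subgroup G).map (e : G →* G)) :=
      IsPGroup.of_card (n := 1) (by rw [hcardmap, pow_one])
    obtain ⟨R, hR⟩ := hpg.exists_le_sylow
    rw [hPuniq R] at hR
    exact hR ⟨x, hx, rfl⟩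
  haveI hnormal : (P : Subgroup G).Normal :=
    ⟨fun x hx g => by simpa using hchar (MulAut.conj g) x hx⟩
  -- generator of P
  have hnt : Nontrivial (P : Subgroup G) :=
    Finite.one_lt_card_iff_nontrivial.mp (by rw [hPcard]; exact hp.one_lt)
  obtain ⟨u', hu'⟩ := exists_ne (1 : (P : Subgroup G))
  have hord' : orderOf u' = p := by
    have hdvd : orderOf u' ∣ p := by
      have hd := orderOf_dvd_natCard u'
      rwa [hPcard] at hd
    rcases (Nat.dvd_prime hp).mp hdvd with h | h
    · exact absurd (orderOf_eq_one_iff.mp h) hu'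
    · exact h
  have hu : (u' : G) ∈ (P : Subgroup G) := u'.2
  have hou : orderOf (u' : G) = p := by rw [Subgroup.orderOf_coe, hord']
  set u : G := (u' : G) with hudef
  have hgen : ∀ v ∈ (P : Subgroup G), ∃ k : ZMod p, v = epow u k := by
    intro v hv
    have hvmem : (⟨v, hv⟩ : (P : Subgroup G)) ∈ Submonoid.powers u' :=
      mem_powers_of_prime_card hPcard hu'
    rw [Submonoid.mem_powers_iff] at hvmem
    obtain ⟨n, hn⟩ := hvmem
    refine ⟨(n : ZMod p), ?_⟩
    rw [epow_natCast hou]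
    have hcoe := congrArg (fun z : (P : Subgroup G) => (z : G)) hn
    simpa using hcoe.symm
  have hgenexp : ∀ h ∈ (P : Subgroup G), ∃ n : ℕ, h = u ^ n := fun h hh => by
    obtain ⟨k, hk⟩ := hgen h hh; exact ⟨k.val, hk⟩
  -- the subgroup S₀ on the image of P under ν
  have hnu1 : nu γ 1 = 1 := nu_one hγ
  have hclosed : ∀ a ∈ nu γ '' ((P : Subgroup G) : Set G),
      ∀ b ∈ nu γ '' ((P : Subgroup G) : Set G), a * b ∈ nu γ '' ((P : Subgroup G) : Set G) := by
    rintro _ ⟨a, ha, rfl⟩ _ ⟨b, hb, rfl⟩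
    rw [nu_mul hγ]
    exact ⟨γ a b * a, (P : Subgroup G).mul_mem (hchar (γ a) b hb) ha, rfl⟩
  obtain ⟨S₀, hS₀⟩ := exists_subgroup_of_mul_closed
    (s := nu γ '' ((P : Subgroup G) : Set G)) ⟨1, (P : Subgroup G).one_mem, hnu1⟩ hclosed
  have hS₀card : Nat.card S₀ = p := by
    have h1 : Nat.card S₀ = Nat.card (nu γ '' ((P : Subgroup G) : Set G)) :=
      Nat.card_congr (Equiv.setCongr hS₀)
    rw [h1, Nat.card_image_of_injective (nu_injective γ), SetLike.coe_sort_coe, hPcard]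
  have hS₀N : S₀ ≤ N := by
    intro x hx
    have hx' : x ∈ (S₀ : Set (Equiv.Perm G)) := hx
    rw [hS₀] at hx'
    obtain ⟨h, _, rfl⟩ := hx'
    exact hass h
  -- γ h has order dividing p for h ∈ P
  have hγp : ∀ h ∈ (P : Subgroup G), (γ h) ^ p = 1 := by
    intro h hh
    have hνp : (nu γ h) ^ p = 1 := by
      have hmem : nu γ h ∈ S₀ := by
        have hx' : nu γ h ∈ (S₀ : Set (Equiv.Perm G)) := by
          rw [hS₀]; exact ⟨h, hh, rfl⟩
        exact hx'
      have hdvd := Subgroup.orderOf_dvd_natCard S₀ hmem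
      rw [hS₀card] at hdvd
      exact orderOf_dvd_iff_pow_eq_one.mp hdvd
    have key : ∀ (k : ℕ) (x : G), ((nu γ h) ^ k) x = ((γ h) ^ k) x * ((nu γ h) ^ k) 1 := by
      intro k
      induction k with
      | zero => intro x; simp
      | succ n ih =>
        have hstep : ∀ y : G, ((nu γ h) ^ (n + 1)) y
            = ((γ h) ^ n) ((γ h) y) * (((γ h) ^ n) h * ((nu γ h) ^ n) 1) := by
          intro y
          have h1 : ((nu γ h) ^ (n + 1)) y = ((nu γ h) ^ n) (nu γ h y) := by
            rw [pow_succ]; rfl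
          rw [h1, nu_apply, ih, map_mul, mul_assoc]
        intro x
        rw [hstep x, hstep 1]
        simp only [map_one, one_mul]
        rw [pow_succ, MulAut.mul_apply]
    have h3 : ∀ x, ((γ h) ^ p) x = x := by
      intro x
      have hx := key p x
      rw [hνp] at hx
      simp at hx
      exact hx.symm
    exact DFunLike.ext _ _ fun x => by simpa using h3 x
  -- conjugation form of γ on P
  have hconj : ∀ h ∈ (P : Subgroup G), ∃ a ∈ (P : Subgroup G), γ h = MulAut.conj a := by
    intro h hh
    obtain ⟨a, haP, ha⟩ := aux_conj hpm hcard hPcard hchar hM hAutM hou hu hgen (γ h) (hγp h hh)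
    refine ⟨a, haP, ?_⟩
    refine DFunLike.ext _ _ fun x => ?_
    rw [MulAut.conj_apply]
    exact ha x
  refine ⟨fun x _ => hass x, ?_⟩
  by_cases hA : ∀ h ∈ (P : Subgroup G), γ h = 1
  · -- ρ case
    have hρ : ∀ h ∈ (P : Subgroup G), nu γ h = rhoPerm h := by
      intro h hh
      ext x
      show γ h x * h = x * h
      rw [hA h hh, MulAut.one_apply]
    refine ⟨S₀, hS₀, hS₀N, hS₀card, Or.inl (Set.image_congr hρ), ?_⟩
    rw [Subgroup.commutator_le]
    rintro g₁ hg₁ g₂ hg₂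
    obtain ⟨g, rfl⟩ := hg₁
    have hg₂' : g₂ ∈ (S₀ : Set (Equiv.Perm G)) := hg₂
    rw [hS₀] at hg₂'
    obtain ⟨h, hh, rfl⟩ := hg₂'
    have hmem' : h⁻¹ * (g⁻¹ * (h * g)) ∈ (P : Subgroup G) := by
      apply Subgroup.mul_mem _ (Subgroup.inv_mem _ hh)
      have := hnormal.conj_mem h hh g⁻¹
      simpa [mul_assoc] using this
    open scoped commutatorElement in
    have hcval : ⁅rhoPerm g, nu γ h⁆ = nu γ (h⁻¹ * (g⁻¹ * (h * g))) := by
      rw [hρ h hh, hρ _ hmem']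
      rw [commutatorElement_def, rhoPerm_inv, rhoPerm_inv, rhoPerm_mul, rhoPerm_mul, rhoPerm_mul]
    rw [hcval]
    show nu γ _ ∈ (S₀ : Set (Equiv.Perm G))
    rw [hS₀]
    exact ⟨_, hmem', rfl⟩
  · -- λ case
    push_neg at hA
    obtain ⟨h₁, hh₁, hγh₁⟩ := hA
    obtain ⟨au, hauP, hγu⟩ := hconj u hu
    obtain ⟨t, haut⟩ := hgen au hauP
    have hγpow : ∀ n : ℕ, γ (u ^ n) = MulAut.conj (au ^ n) := by
      intro n
      induction n with
      | zero => rw [pow_zero, pow_zero, gamma_one hγ, map_one]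
      | succ k ih =>
        have hcomm : (γ u) (u ^ k) = u ^ k := by
          rw [hγu, MulAut.conj_apply, haut]
          show u ^ t.val * u ^ k * (u ^ t.val)⁻¹ = u ^ k
          have hcc : u ^ t.val * u ^ k = u ^ k * u ^ t.val :=
            ((Commute.refl u).pow_pow _ _).eq
          rw [hcc, mul_inv_cancel_right]
        have heq := hγ (u ^ k) u
        rw [hcomm, ← pow_succ] at heq
        rw [heq, ih, hγu, ← map_mul, ← pow_succ']
    have hune : u ≠ 1 := by
      intro h
      rw [h, orderOf_one] at hou
      exact hp.one_lt.ne' hou.symm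
    have hnc : ∃ g₀ : G, g₀⁻¹ * u * g₀ ≠ u := by
      by_contra hcen
      push_neg at hcen
      apply hγh₁
      obtain ⟨n, rfl⟩ := hgenexp h₁ hh₁
      rw [hγpow n]
      have hcommute : ∀ x : G, Commute (au ^ n) x := by
        intro x
        obtain ⟨nt, hnt2⟩ := hgenexp au hauP
        have h1 : Commute u x := by
          show u * x = x * u
          calc u * x = x * (x⁻¹ * u * x) := by group
            _ = x * u := by rw [hcen x]
        rw [hnt2, ← pow_mul]
        exact h1.pow_left _
      refine DFunLike.ext _ _ fun x => ?_
      rw [MulAut.conj_apply, (hcommute x).eq, mul_inv_cancel_right, MulAut.one_apply]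
    obtain ⟨g₀, hg₀⟩ := hnc
    have hconjPm : ∀ g : G, g⁻¹ * u * g ∈ (P : Subgroup G) := fun g => by
      simpa using hnormal.conj_mem u hu g⁻¹
    choose c hc using fun g => hgen _ (hconjPm g)
    have hc₀ : c g₀ ≠ 1 := by
      intro h
      apply hg₀
      rw [hc g₀, h, epow_one hou]
    obtain ⟨j, hj⟩ := hgen (γ g₀ u) (hchar (γ g₀) u hu)
    have hj0 : j ≠ 0 := by
      intro h
      rw [h, epow_zero] at hj
      exact hune ((γ g₀).injective (hj.trans (map_one (γ g₀)).symm))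
    obtain ⟨w, hwdef⟩ : ∃ w, w = γ g₀ au := ⟨_, rfl⟩
    obtain ⟨z, hzdef⟩ : ∃ z, z = w * (g₀⁻¹ * γ g₀ (au⁻¹ * u) * g₀) := ⟨_, rfl⟩
    have hzP : z ∈ (P : Subgroup G) := by
      rw [hzdef, hwdef]
      apply Subgroup.mul_mem
      · exact hchar (γ g₀) au hauP
      · have h1 : γ g₀ (au⁻¹ * u) ∈ (P : Subgroup G) :=
          hchar (γ g₀) _ (Subgroup.mul_mem _ (Subgroup.inv_mem _ hauP) hu)
        have := hnormal.conj_mem _ h1 g₀⁻¹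
        simpa using this
    obtain ⟨W, hWdef⟩ : ∃ W : Equiv.Perm G,
        W = rhoPerm z * (MulAut.conj w).toEquiv := ⟨_, rfl⟩
    have hWapp : ∀ x, W x = w * x * w⁻¹ * z := by
      intro x; rw [hWdef]; rfl
    have hkey : nu γ g₀ * nu γ u = W * nu γ g₀ := by
      ext x
      simp only [Equiv.Perm.mul_apply, nu_apply, hWapp]
      rw [hγu, MulAut.conj_apply]
      rw [hzdef, hwdef]
      simp only [map_mul, map_inv]
      group
    have hXz : W = nu γ z := by
      have hX_N : (nu γ g₀ * nu γ u) * (nu γ g₀)⁻¹ ∈ N :=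
        N.mul_mem (N.mul_mem (hass g₀) (hass u)) (N.inv_mem (hass g₀))
      have h2 : W = (nu γ g₀ * nu γ u) * (nu γ g₀)⁻¹ := by
        rw [hkey]; group
      have hW_N : W ∈ N := by rw [h2]; exact hX_N
      have hW1 : W 1 = z := by rw [hWapp]; group
      have hz1 : nu γ z 1 = z := by rw [nu_apply, map_one, one_mul]
      obtain ⟨n₀, hn₀, huniq⟩ := hreg 1 z
      have e1 : (⟨W, hW_N⟩ : N) = n₀ := huniq _ hW1
      have e2 : (⟨nu γ z, hass z⟩ : N) = n₀ := huniq _ hz1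
      have e3 := e1.trans e2.symm
      exact congrArg (fun n : N => (n : Equiv.Perm G)) e3
    have hγz : γ z = MulAut.conj w := by
      refine DFunLike.ext _ _ fun x => ?_
      have hx := DFunLike.congr_fun hXz x
      rw [hWapp x, nu_apply] at hx
      have h3 : w * x * w⁻¹ = γ z x := mul_right_cancel hx
      rw [MulAut.conj_apply]
      exact h3.symm
    have hαau : w = epow u (j * t) := by
      rw [hwdef, haut]
      show γ g₀ (u ^ t.val) = _
      rw [map_pow, hj, epow_pow_val hou j t]
    have hau_inv_u : epow u (1 - t) = au⁻¹ * u := by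
      have h0 : (1 : ZMod p) - t = -t + 1 := by ring
      rw [h0, epow_add hou, epow_neg hou, epow_one hou, haut]
    obtain ⟨K, hKdef⟩ : ∃ K : ZMod p, K = j * t + c g₀ * (j * (1 - t)) := ⟨_, rfl⟩
    have hz_e : z = epow u K := by
      have h1 : γ g₀ (au⁻¹ * u) = epow u (j * (1 - t)) := by
        rw [← hau_inv_u]
        show γ g₀ (u ^ (1 - t).val) = _
        rw [map_pow, hj, epow_pow_val hou]
      rw [hKdef]
      calc z = w * (g₀⁻¹ * γ g₀ (au⁻¹ * u) * g₀) := hzdef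
        _ = epow u (j * t) * (g₀⁻¹ * epow u (j * (1 - t)) * g₀) := by rw [hαau, h1]
        _ = epow u (j * t) * epow u (c g₀ * (j * (1 - t))) := by rw [conj_epow hou (hc g₀)]
        _ = epow u (j * t + c g₀ * (j * (1 - t))) := (epow_add hou _ _).symm
    have hγzconj : γ z = MulAut.conj (epow u (t * K)) := by
      have h1 : z = u ^ K.val := hz_e
      rw [h1, hγpow K.val]
      congr 1
      rw [haut]
      exact epow_pow_val hou t K
    have hcentral : ∀ k : ZMod p, (∀ x : G, epow u k * x = x * epow u k) → k = 0 := by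
      intro k hk
      by_contra hk0
      apply hg₀
      have h1 : epow u k ^ (k⁻¹).val = epow u (k * k⁻¹) := epow_pow_val hou k k⁻¹
      have h2 : epow u k ^ (k⁻¹).val = u := by
        rw [h1, mul_inv_cancel₀ hk0, epow_one hou]
      have h3 : Commute (epow u k) g₀ := hk g₀
      have h4 : Commute (epow u k ^ (k⁻¹).val) g₀ := h3.pow_left _
      rw [h2] at h4
      calc g₀⁻¹ * u * g₀ = g₀⁻¹ * (u * g₀) := by group
        _ = g₀⁻¹ * (g₀ * u) := by rw [h4.eq]
        _ = u := by group
    have hfinal : t * K = j * t := by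
      have heq : MulAut.conj (epow u (t * K)) = MulAut.conj (epow u (j * t)) := by
        rw [← hγzconj, hγz, hαau]
      have hcomm : ∀ x : G, epow u (t * K - j * t) * x = x * epow u (t * K - j * t) := by
        intro x
        have hcf := DFunLike.congr_fun heq x
        rw [MulAut.conj_apply, MulAut.conj_apply] at hcf
        have hd : epow u (t * K - j * t) = (epow u (j * t))⁻¹ * epow u (t * K) := by
          rw [← epow_neg hou, ← epow_add hou]
          congr 1
          ring
        rw [hd]
        calc (epow u (j * t))⁻¹ * epow u (t * K) * x
            = (epow u (j * t))⁻¹ * (epow u (t * K) * x * (epow u (t * K))⁻¹)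
              * epow u (t * K) := by group
          _ = (epow u (j * t))⁻¹ * (epow u (j * t) * x * (epow u (j * t))⁻¹)
              * epow u (t * K) := by rw [hcf]
          _ = x * ((epow u (j * t))⁻¹ * epow u (t * K)) := by group
      have hsub := hcentral _ hcomm
      exact sub_eq_zero.mp hsub
    have ht0 : t ≠ 0 := by
      intro h
      apply hγh₁
      obtain ⟨n, rfl⟩ := hgenexp h₁ hh₁
      rw [hγpow n]
      have hau1 : au = 1 := by rw [haut, h, epow_zero]
      rw [hau1, one_pow]
      exact map_one MulAut.conj
    have ht1 : t = 1 := by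
      have hKexp := hfinal
      rw [hKdef] at hKexp
      have hfe : (j * t) * ((1 - t) * (c g₀ - 1)) = 0 := by linear_combination hKexp
      rcases mul_eq_zero.mp hfe with h | h
      · rcases mul_eq_zero.mp h with h' | h'
        · exact absurd h' hj0
        · exact absurd h' ht0
      · rcases mul_eq_zero.mp h with h' | h'
        · linear_combination -h'
        · exact absurd (by linear_combination h' : c g₀ = 1) hc₀
    have hau_u : au = u := by rw [haut, ht1, epow_one hou]
    have hlam : ∀ h ∈ (P : Subgroup G), nu γ h = Equiv.mulLeft h := by
      intro h hh
      obtain ⟨n, rfl⟩ := hgenexp h hh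
      ext x
      show γ (u ^ n) x * u ^ n = u ^ n * x
      rw [hγpow n, hau_u, MulAut.conj_apply, inv_mul_cancel_right]
    refine ⟨S₀, hS₀, hS₀N, hS₀card, Or.inr (Set.image_congr hlam), ?_⟩
    rw [Subgroup.commutator_le]
    rintro g₁ hg₁ g₂ hg₂
    obtain ⟨g, rfl⟩ := hg₁
    have hg₂' : g₂ ∈ (S₀ : Set (Equiv.Perm G)) := hg₂
    rw [hS₀] at hg₂'
    obtain ⟨h, hh, rfl⟩ := hg₂'
    have hcommu : rhoPerm g * nu γ h = nu γ h * rhoPerm g := by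
      rw [hlam h hh]
      ext x
      show (h * x) * g = h * (x * g)
      rw [mul_assoc]
    open scoped commutatorElement in
    have h1 : ⁅rhoPerm g, nu γ h⁆ = 1 :=
      commutatorElement_eq_one_iff_mul_comm.mpr hcommu
    rw [h1]
    exact S₀.one_mem
end HGS
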